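/- Let n ≥ 1 and let ρ_1,…,ρ_n, π_1,…,π_n, κ_1,…,κ_n, σ_1,…,σ_n be real numbers. Let J be the 2n × 2n real matrix, with rows and columns indexed by the symbols r_1,…,r_n, p_1,…,p_n, whose only nonzero entries are: J_{r_i, r_i} = −ρ_i, J_{r_i, p_{i−1}} = σ_i (indices modulo n, so p_0 := p_n), J_{p_i, r_i} = κ_i, and J_{p_i, p_i} = −π_i, for i = 1,…,n. Then the characteristic polynomial of J is det(λI − J) = ∏_{j=1}^{n} (λ + ρ_j)(λ + π_j) − ∏_{j=1}^{n} κ_j σ_j. -/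

import Mathlib

open Polynomial
open Fin.NatCast

/-- The Jacobian matrix of the generalized `n`-gene repressilator at a steady
state, with rows and columns indexed by `r_1,…,r_n` (the `Sum.inl` indices) and
`p_1,…,p_n` (the `Sum.inr` indices): the only nonzero entries are
`J_{r_i, r_i} = -ρ i`, `J_{r_i, p_{i-1}} = σ i` (indices mod `n`),
`J_{p_i, r_i} = κ i`, and `J_{p_i, p_i} = -π i`. -/
def repressilatorJacobian (n : ℕ) [NeZero n] (ρ π κ σ : Fin n → ℝ) :
    Matrix (Fin n ⊕ Fin n) (Fin n ⊕ Fin n) ℝ :=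
  Matrix.of fun i j =>
    match i, j with
    | .inl i, .inl j => if j = i then -ρ i else 0
    | .inl i, .inr j => if j = i - 1 then σ i else 0
    | .inr i, .inl j => if j = i then κ i else 0
    | .inr i, .inr j => if j = i then -π i else 0

/-- The big `2n`-cycle `r_1 → p_1 → r_2 → p_2 → ⋯ → r_1`. -/
def repCyc (n : ℕ) [NeZero n] : Equiv.Perm (Fin n ⊕ Fin n) :=
  (Equiv.sumCongr (Equiv.refl (Fin n)) (Equiv.addRight 1)).trans
    (Equiv.sumComm (Fin n) (Fin n))

lemma repCyc_inl {n : ℕ} [NeZero n] (j : Fin n) :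
    repCyc n (Sum.inl j) = Sum.inr j := rfl

lemma repCyc_inr {n : ℕ} [NeZero n] (j : Fin n) :
    repCyc n (Sum.inr j) = Sum.inl (j + 1) := rfl

lemma repCyc_pow {n : ℕ} [NeZero n] (k : ℕ) :
    ((repCyc n) ^ (2 * k)) (Sum.inl 0) = Sum.inl (k : Fin n) ∧
    ((repCyc n) ^ (2 * k + 1)) (Sum.inl 0) = Sum.inr (k : Fin n) := by
  induction k with
  | zero => simp [repCyc_inl]
  | succ k ih =>
    have h2 : 2 * (k + 1) = (2 * k + 1) + 1 := by ring
    have hcast : ((k + 1 : ℕ) : Fin n) = (k : Fin n) + 1 := by push_cast; ring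
    have hstep : ((repCyc n) ^ (2 * (k + 1))) (Sum.inl 0) = Sum.inl ((k : Fin n) + 1) := by
      rw [h2, pow_succ', Equiv.Perm.mul_apply]
      rw [show (repCyc n ^ (2 * k + 1)) (Sum.inl 0) = Sum.inr (k : Fin n) from ih.2]
      exact repCyc_inr _
    refine ⟨by rw [hstep, hcast], ?_⟩
    rw [pow_succ', Equiv.Perm.mul_apply, hstep, repCyc_inl, hcast]

lemma repCyc_ne (n : ℕ) [NeZero n] (x : Fin n ⊕ Fin n) : repCyc n x ≠ x := by
  cases x with
  | inl j => simp [repCyc_inl]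
  | inr j => simp [repCyc_inr]

lemma repCyc_isCycle (n : ℕ) [NeZero n] : (repCyc n).IsCycle := by
  refine ⟨Sum.inl 0, repCyc_ne n _, fun y _ => ?_⟩
  cases y with
  | inl j =>
    refine ⟨(2 * j.val : ℕ), ?_⟩
    rw [zpow_natCast, (repCyc_pow j.val).1, Fin.cast_val_eq_self]
  | inr j =>
    refine ⟨(2 * j.val + 1 : ℕ), ?_⟩
    rw [zpow_natCast, (repCyc_pow j.val).2, Fin.cast_val_eq_self]

lemma repCyc_sign (n : ℕ) [NeZero n] : Equiv.Perm.sign (repCyc n) = -1 := by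
  rw [(repCyc_isCycle n).sign]
  have hsupp : (repCyc n).support = Finset.univ := by
    ext x; simp [Equiv.Perm.mem_support, repCyc_ne n x]
  rw [hsupp, Finset.card_univ, Fintype.card_sum, Fintype.card_fin]
  rw [Even.neg_one_pow ⟨n, rfl⟩]

/-- The characteristic polynomial `det(λI − J)` of the repressilator Jacobian is
`∏_{j=1}^n (λ + ρ_j)(λ + π_j) − ∏_{j=1}^n κ_j σ_j`. -/
theorem repressilatorJacobian_charpoly (n : ℕ) [NeZero n] (ρ π κ σ : Fin n → ℝ) :
    (repressilatorJacobian n ρ π κ σ).charpoly =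
      (∏ j : Fin n, ((X + C (ρ j)) * (X + C (π j)))) - C (∏ j : Fin n, κ j * σ j) := by
  classical
  set J := repressilatorJacobian n ρ π κ σ with hJ
  -- entries of the characteristic matrix
  have hll : ∀ i j : Fin n, J.charmatrix (Sum.inl i) (Sum.inl j) =
      if j = i then X + C (ρ i) else 0 := by
    intro i j
    by_cases h : j = i
    · subst h; rw [if_pos rfl, Matrix.charmatrix_apply_eq]
      simp [hJ, repressilatorJacobian, sub_neg_eq_add]
    · rw [if_neg h, Matrix.charmatrix_apply_ne _ _ _ (by simp [Ne.symm h])]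
      simp [hJ, repressilatorJacobian, h]
  have hlr : ∀ i j : Fin n, J.charmatrix (Sum.inl i) (Sum.inr j) =
      if j = i - 1 then -C (σ i) else 0 := by
    intro i j
    rw [Matrix.charmatrix_apply_ne _ _ _ (by simp)]
    simp only [hJ, repressilatorJacobian, Matrix.of_apply]
    split <;> simp
  have hrl : ∀ i j : Fin n, J.charmatrix (Sum.inr i) (Sum.inl j) =
      if j = i then -C (κ i) else 0 := by
    intro i j
    rw [Matrix.charmatrix_apply_ne _ _ _ (by simp)]
    simp only [hJ, repressilatorJacobian, Matrix.of_apply]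
    split <;> simp
  have hrr : ∀ i j : Fin n, J.charmatrix (Sum.inr i) (Sum.inr j) =
      if j = i then X + C (π i) else 0 := by
    intro i j
    by_cases h : j = i
    · subst h; rw [if_pos rfl, Matrix.charmatrix_apply_eq]
      simp [hJ, repressilatorJacobian, sub_neg_eq_add]
    · rw [if_neg h, Matrix.charmatrix_apply_ne _ _ _ (by simp [Ne.symm h])]
      simp [hJ, repressilatorJacobian, h]
  -- only the identity and the big cycle contribute to the determinant
  have key : ∀ g : Equiv.Perm (Fin n ⊕ Fin n),
      g ∉ ({1, repCyc n} : Finset (Equiv.Perm (Fin n ⊕ Fin n))) →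
      Equiv.Perm.sign g • ∏ i, J.charmatrix (g i) i = 0 := by
    intro g hg
    simp only [Finset.mem_insert, Finset.mem_singleton, not_or] at hg
    rcases hg with ⟨hg1, hgc⟩
    by_contra hne
    have hprod : ∀ i, J.charmatrix (g i) i ≠ 0 := by
      intro i hi
      apply hne
      rw [show (∏ i, J.charmatrix (g i) i) = 0 from
        Finset.prod_eq_zero (Finset.mem_univ i) hi, smul_zero]
    -- per-column constraints
    have P1 : ∀ j : Fin n, g (Sum.inl j) = Sum.inl j ∨ g (Sum.inl j) = Sum.inr j := by
      intro j
      have h := hprod (Sum.inl j)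
      cases hx : g (Sum.inl j) with
      | inl i =>
        rw [hx, hll] at h
        have h' : j = i := by
          by_contra h'; rw [if_neg h'] at h; exact h rfl
        left; rw [h']
      | inr i =>
        rw [hx, hrl] at h
        have h' : j = i := by
          by_contra h'; rw [if_neg h'] at h; exact h rfl
        right; rw [h']
    have P2 : ∀ j : Fin n, g (Sum.inr j) = Sum.inr j ∨ g (Sum.inr j) = Sum.inl (j + 1) := by
      intro j
      have h := hprod (Sum.inr j)
      cases hx : g (Sum.inr j) with
      | inl i =>
        rw [hx, hlr] at h
        have h' : j = i - 1 := by
          by_contra h'; rw [if_neg h'] at h; exact h rfl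
        right; rw [h', sub_add_cancel]
      | inr i =>
        rw [hx, hrr] at h
        have h' : j = i := by
          by_contra h'; rw [if_neg h'] at h; exact h rfl
        left; rw [h']
    by_cases hall : ∀ j : Fin n, g (Sum.inl j) = Sum.inl j
    · -- then g = 1
      apply hg1
      ext x
      cases x with
      | inl j => rw [hall j]; rfl
      | inr j =>
        rcases P2 j with h | h
        · rw [h]; rfl
        · exact absurd (g.injective (h.trans (hall (j + 1)).symm)) Sum.inr_ne_inl
    · -- then g = repCyc n
      apply hgc
      push_neg at hall
      obtain ⟨j₀, hj₀⟩ := hall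
      have hj₀' : g (Sum.inl j₀) = Sum.inr j₀ := (P1 j₀).resolve_left hj₀
      have claim : ∀ k : ℕ, g (Sum.inl (j₀ + (k : Fin n))) = Sum.inr (j₀ + (k : Fin n)) ∧
          g (Sum.inr (j₀ + (k : Fin n))) = Sum.inl (j₀ + (k : Fin n) + 1) := by
        intro k
        induction k with
        | zero =>
          simp only [Nat.cast_zero, add_zero]
          refine ⟨hj₀', ?_⟩
          rcases P2 j₀ with h | h
          · exact absurd (g.injective (hj₀'.trans h.symm)) Sum.inl_ne_inr
          · exact h
        | succ k ih =>
          have hcast : ((k + 1 : ℕ) : Fin n) = (k : Fin n) + 1 := by push_cast; ring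
          rw [hcast, ← add_assoc]
          have h1 : g (Sum.inl (j₀ + (k : Fin n) + 1)) = Sum.inr (j₀ + (k : Fin n) + 1) := by
            rcases P1 (j₀ + (k : Fin n) + 1) with h | h
            · exact absurd (g.injective (ih.2.trans h.symm)) Sum.inr_ne_inl
            · exact h
          refine ⟨h1, ?_⟩
          rcases P2 (j₀ + (k : Fin n) + 1) with h | h
          · exact absurd (g.injective (h1.trans h.symm)) Sum.inl_ne_inr
          · exact h
      ext x
      cases x with
      | inl j =>
        have := (claim ((j - j₀).val)).1
        rw [Fin.cast_val_eq_self, add_sub_cancel] at this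
        rw [this, repCyc_inl]
      | inr j =>
        have := (claim ((j - j₀).val)).2
        rw [Fin.cast_val_eq_self, add_sub_cancel] at this
        rw [this, repCyc_inr]
  -- now compute
  have hne1 : (1 : Equiv.Perm (Fin n ⊕ Fin n)) ≠ repCyc n := by
    intro h
    exact repCyc_ne n (Sum.inl 0) (by rw [← h]; rfl)
  rw [show J.charpoly = J.charmatrix.det from rfl, Matrix.det_apply]
  rw [← Finset.sum_subset (Finset.subset_univ ({1, repCyc n} :
      Finset (Equiv.Perm (Fin n ⊕ Fin n)))) (fun g _ hg => key g hg)]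
  rw [Finset.sum_pair hne1]
  -- the identity term
  have hid : Equiv.Perm.sign (1 : Equiv.Perm (Fin n ⊕ Fin n)) •
      ∏ i, J.charmatrix ((1 : Equiv.Perm (Fin n ⊕ Fin n)) i) i =
      ∏ j : Fin n, ((X + C (ρ j)) * (X + C (π j))) := by
    rw [map_one, one_smul]
    simp only [Equiv.Perm.one_apply]
    rw [Fintype.prod_sum_type, Finset.prod_mul_distrib]
    congr 1
    · exact Finset.prod_congr rfl fun j _ => by rw [hll, if_pos rfl]
    · exact Finset.prod_congr rfl fun j _ => by rw [hrr, if_pos rfl]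
  -- the cycle term
  have hcyc : Equiv.Perm.sign (repCyc n) • ∏ i, J.charmatrix (repCyc n i) i =
      -C (∏ j : Fin n, κ j * σ j) := by
    rw [repCyc_sign]
    have hp : ∏ i, J.charmatrix (repCyc n i) i = C (∏ j : Fin n, κ j * σ j) := by
      rw [Fintype.prod_sum_type]
      have e1 : ∀ j : Fin n, J.charmatrix (repCyc n (Sum.inl j)) (Sum.inl j) = -C (κ j) := by
        intro j; rw [repCyc_inl, hrl, if_pos rfl]
      have e2 : ∀ j : Fin n, J.charmatrix (repCyc n (Sum.inr j)) (Sum.inr j) =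
          -C (σ (j + 1)) := by
        intro j; rw [repCyc_inr, hlr, if_pos (add_sub_cancel_right j 1).symm]
      rw [Finset.prod_congr rfl fun j _ => e1 j, Finset.prod_congr rfl fun j _ => e2 j]
      have e3 : ∏ j : Fin n, -C (σ (j + 1)) = ∏ j : Fin n, -C (σ j) :=
        Fintype.prod_equiv (Equiv.addRight (1 : Fin n)) _ _ (fun j => rfl)
      rw [e3, ← Finset.prod_mul_distrib]
      rw [Finset.prod_congr rfl fun j _ => (by rw [neg_mul_neg, ← C_mul] :
        -C (κ j) * -C (σ j) = C (κ j * σ j))]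
      rw [← map_prod]
    rw [hp]
    simp
  rw [hid, hcyc]
  ring
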